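/- Let (a_n)_{n≥0} be a strictly increasing sequence of non-negative integers and let γ = Σ_{i=0}^∞ 2^{a_i} ∈ ℤ₂ (the series converges 2-adically). Let m be a positive integer with base-2 expansion m = Σ_{i=0}^{N} 2^{b_i}, where b_0 < b_1 < ⋯ < b_N, and let M be the (unique) non-negative integer such that Σ_{i=0}^{M−1} 2^{a_i} < m ≤ Σ_{i=0}^{M} 2^{a_i}. Then v₂(C(γ,m)) ≥ a_M − b_N. Moreover, if m = 2^b is a power of 2 (so N = 0 and b_0 = b), then v₂(C(γ,2^b)) = a_M − b exactly. -/

import Mathlib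

lemma aux_norm_two_pow (k : ℕ) : ‖(2 : ℤ_[2]) ^ k‖ = (2:ℝ)⁻¹ ^ k := by
  rw [norm_pow]
  congr 1
  have : ((2:ℕ) : ℤ_[2]) = (2 : ℤ_[2]) := by norm_cast
  rw [← this, PadicInt.norm_p]
  norm_num

lemma aux_summable (a : ℕ → ℕ) (ha : StrictMono a) :
    Summable (fun i => (2 : ℤ_[2]) ^ (a i)) := by
  apply Summable.of_norm_bounded (g := fun i => (2:ℝ)⁻¹ ^ i)
    (summable_geometric_of_lt_one (by norm_num) (by norm_num))
  intro i
  rw [aux_norm_two_pow]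
  exact pow_le_pow_of_le_one (by norm_num) (by norm_num) ha.le_apply

lemma aux_tail (a : ℕ → ℕ) (ha : StrictMono a) (K : ℕ) :
    ‖(∑' i, (2 : ℤ_[2]) ^ (a i)) - ∑ k ∈ Finset.range K, (2:ℤ_[2]) ^ (a k)‖
      ≤ 2 * (2:ℝ)⁻¹ ^ K := by
  have hs := aux_summable a ha
  have h1 : (∑' i, (2 : ℤ_[2]) ^ (a i)) - ∑ k ∈ Finset.range K, (2:ℤ_[2]) ^ (a k)
      = ∑' i, (2:ℤ_[2]) ^ (a (i + K)) := by
    rw [← Summable.sum_add_tsum_nat_add K hs]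
    ring
  have hgeo : Summable (fun i : ℕ => (2:ℝ)⁻¹ ^ i * (2:ℝ)⁻¹ ^ K) :=
    Summable.mul_right _ (summable_geometric_of_lt_one (by norm_num) (by norm_num))
  have hb : ∀ i : ℕ, ‖(2:ℤ_[2]) ^ (a (i + K))‖ ≤ (2:ℝ)⁻¹ ^ i * (2:ℝ)⁻¹ ^ K := by
    intro i
    rw [aux_norm_two_pow, ← pow_add]
    exact pow_le_pow_of_le_one (by norm_num) (by norm_num) ha.le_apply
  have hsn : Summable (fun i : ℕ => ‖(2:ℤ_[2]) ^ (a (i + K))‖) :=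
    Summable.of_nonneg_of_le (fun i => norm_nonneg _) hb hgeo
  rw [h1]
  calc ‖∑' i, (2:ℤ_[2]) ^ (a (i + K))‖ ≤ ∑' i, ‖(2:ℤ_[2]) ^ (a (i + K))‖ :=
        norm_tsum_le_tsum_norm hsn
    _ ≤ ∑' i : ℕ, (2:ℝ)⁻¹ ^ i * (2:ℝ)⁻¹ ^ K := Summable.tsum_le_tsum hb hsn hgeo
    _ = 2 * (2:ℝ)⁻¹ ^ K := by
        rw [tsum_mul_right, tsum_geometric_of_lt_one (by norm_num) (by norm_num)]
        norm_num [mul_comm]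

/-- The generalized binomial coefficient `C(γ, m) = γ(γ-1)⋯(γ-m+1)/m!` for `γ ∈ ℚ_p`. -/
noncomputable def pChoose (p : ℕ) [Fact p.Prime] (γ : ℚ_[p]) (m : ℕ) : ℚ_[p] :=
  (descPochhammer ℚ_[p] m).eval γ / (m.factorial : ℚ_[p])

lemma aux_pchoose_nat (n m : ℕ) : pChoose 2 (n : ℚ_[2]) m = (n.choose m : ℚ_[2]) := by
  unfold pChoose
  rw [descPochhammer_eval_eq_descFactorial, Nat.descFactorial_eq_factorial_mul_choose]
  push_cast
  rw [mul_comm, mul_div_assoc, div_self (by exact_mod_cast m.factorial_ne_zero), mul_one]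

lemma aux_eval_cast (x : ℤ_[2]) (m : ℕ) :
    (descPochhammer ℚ_[2] m).eval (x : ℚ_[2]) = (((descPochhammer ℤ_[2] m).eval x : ℤ_[2]) : ℚ_[2]) := by
  have h := descPochhammer_map (PadicInt.Coe.ringHom (p := 2)) m
  rw [← h, Polynomial.eval_map]
  exact Polynomial.eval₂_at_apply PadicInt.Coe.ringHom x


lemma aux_two_pow_sum_lt (i : ℕ) : ∑ j ∈ Finset.range i, 2 ^ j < 2 ^ i := by
  induction i with
  | zero => simp
  | succ n ih => rw [Finset.sum_range_succ, pow_succ]; omega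

lemma aux_sum_two_pow_lt {a : ℕ → ℕ} {s : Finset ℕ} (ha : Set.InjOn a s) {i : ℕ}
    (h : ∀ k ∈ s, a k < i) : ∑ k ∈ s, 2 ^ (a k) < 2 ^ i := by
  have h1 : ∑ k ∈ s, 2 ^ (a k) = ∑ j ∈ s.image a, 2 ^ j :=
    (Finset.sum_image (fun x hx y hy hxy => ha hx hy hxy)).symm
  have h2 : s.image a ⊆ Finset.range i := by
    intro j hj
    simp only [Finset.mem_image] at hj
    obtain ⟨k, hk, rfl⟩ := hj
    exact Finset.mem_range.2 (h k hk)
  calc ∑ k ∈ s, 2 ^ a k = ∑ j ∈ s.image a, 2 ^ j := h1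
    _ ≤ ∑ j ∈ Finset.range i, 2 ^ j := Finset.sum_le_sum_of_subset h2
    _ < 2 ^ i := aux_two_pow_sum_lt i

open Classical in
lemma aux_mod {a : ℕ → ℕ} {s : Finset ℕ} (ha : Set.InjOn a s) (i : ℕ) :
    (∑ k ∈ s, 2 ^ (a k)) % 2 ^ i = ∑ k ∈ s.filter (fun k => a k < i), 2 ^ (a k) := by
  have hsplit : ∑ k ∈ s, 2 ^ (a k) =
      (∑ k ∈ s.filter (fun k => a k < i), 2 ^ (a k)) +
        ∑ k ∈ s.filter (fun k => ¬ a k < i), 2 ^ (a k) :=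
    (Finset.sum_filter_add_sum_filter_not s _ _).symm
  have hdvd : 2 ^ i ∣ ∑ k ∈ s.filter (fun k => ¬ a k < i), 2 ^ (a k) :=
    Finset.dvd_sum fun k hk =>
      pow_dvd_pow 2 (le_of_not_gt (by simpa using (Finset.mem_filter.1 hk).2))
  obtain ⟨c, hc⟩ := hdvd
  have hlt : ∑ k ∈ s.filter (fun k => a k < i), 2 ^ (a k) < 2 ^ i :=
    aux_sum_two_pow_lt (ha.mono (Finset.coe_subset.mpr (Finset.filter_subset (fun k => a k < i) s)))
      fun k hk => (Finset.mem_filter.1 hk).2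
  rw [hsplit, hc, Nat.add_mul_mod_self_left, Nat.mod_eq_of_lt hlt]

open Classical in
lemma aux_kummer (a : ℕ → ℕ) (ha : StrictMono a)
    (N : ℕ) (b : ℕ → ℕ) (hb : StrictMonoOn b (Set.Iic N))
    (m : ℕ) (hm : m = ∑ i ∈ Finset.range (N + 1), 2 ^ (b i))
    (M : ℕ) (hM1 : ∑ i ∈ Finset.range M, 2 ^ (a i) < m)
    (hM2 : m ≤ ∑ i ∈ Finset.range (M + 1), 2 ^ (a i))
    (K : ℕ) (hK : M < K) :
    m ≤ ∑ k ∈ Finset.range K, 2 ^ (a k) ∧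
    padicValNat 2 ((∑ k ∈ Finset.range K, 2 ^ (a k)).choose m) ≤ a M ∧
    a M ≤ padicValNat 2 ((∑ k ∈ Finset.range K, 2 ^ (a k)).choose m) + b N ∧
    (N = 0 → padicValNat 2 ((∑ k ∈ Finset.range K, 2 ^ (a k)).choose m) + b 0 = a M) := by
  set n := ∑ k ∈ Finset.range K, 2 ^ (a k) with hn
  set S := ∑ k ∈ Finset.range (M + 1), 2 ^ (a k) with hS
  have hSn : S ≤ n :=
    Finset.sum_le_sum_of_subset (Finset.range_subset_range.2 hK)
  have hmn : m ≤ n := hM2.trans hSn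
  have hm0 : 0 < m := lt_of_le_of_lt (Nat.zero_le _) hM1
  -- the bound b N on top bit of m
  have hba : Set.InjOn b ↑(Finset.range (N + 1)) := by
    apply (hb.injOn).mono
    intro x hx
    simp only [Finset.coe_range, Set.mem_Iio] at hx
    exact Set.mem_Iic.2 (by omega)
  have hbm : ∀ k ∈ Finset.range (N + 1), b k ≤ b N := by
    intro k hk
    rcases eq_or_lt_of_le (show k ≤ N by simpa [Nat.lt_succ_iff] using hk) with h | h
    · exact h ▸ le_refl _
    · exact (hb (Set.mem_Iic.2 (by omega)) (Set.mem_Iic.2 le_rfl) h).le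
  have hm_lt : m < 2 ^ (b N + 1) := by
    rw [hm]
    exact aux_sum_two_pow_lt hba fun k hk => Nat.lt_succ_of_le (hbm k hk)
  -- r and t
  have hmS : m ≤ S := hM2
  set r := S - m with hr'
  have hr : m + r = S := by omega
  have hSsucc : S = (∑ k ∈ Finset.range M, 2 ^ (a k)) + 2 ^ (a M) := Finset.sum_range_succ _ _
  have hrlt : r < 2 ^ (a M) := by omega
  set t := ∑ k ∈ Finset.Ico (M + 1) K, 2 ^ (a k) with ht
  have hnt : n = S + t := by
    rw [hn, hS, ht, Finset.range_eq_Ico]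
    rw [Finset.range_eq_Ico]
    exact (Finset.sum_Ico_consecutive (fun k => 2 ^ (a k)) (Nat.zero_le (M + 1)) hK).symm
  have hx : n - m = r + t := by omega
  have haM1 : S < 2 ^ (a M + 1) := by
    apply aux_sum_two_pow_lt (ha.injective.injOn)
    intro k hk
    have : k ≤ M := by simpa [Nat.lt_succ_iff] using hk
    exact Nat.lt_succ_of_le (ha.monotone this)
  have hnmod : ∀ i, n % 2 ^ i =
      ∑ k ∈ (Finset.range K).filter (fun k => a k < i), 2 ^ (a k) := fun i =>
    aux_mod (ha.injective.injOn) i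
  -- carries in (b N, a M]
  have hcarry : ∀ i, b N < i → i ≤ a M → 2 ^ i ≤ m % 2 ^ i + (n - m) % 2 ^ i := by
    intro i hi1 hi2
    have hmmod : m % 2 ^ i = m :=
      Nat.mod_eq_of_lt (lt_of_lt_of_le hm_lt (pow_le_pow_right₀ one_le_two hi1))
    by_contra hcon
    push_neg at hcon
    have hsum : m % 2 ^ i + (n - m) % 2 ^ i = n % 2 ^ i := by
      have h1 : n % 2 ^ i = (m % 2 ^ i + (n - m) % 2 ^ i) % 2 ^ i := by
        conv_lhs => rw [show n = m + (n - m) by omega]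
        rw [Nat.add_mod]
      rw [h1, Nat.mod_eq_of_lt hcon]
    have hsub : (Finset.range K).filter (fun k => a k < i) ⊆ Finset.range M := by
      intro k hk
      have hk2 := (Finset.mem_filter.1 hk).2
      have : a k < a M := lt_of_lt_of_le hk2 hi2
      exact Finset.mem_range.2 (ha.lt_iff_lt.1 this)
    have hle : n % 2 ^ i ≤ ∑ k ∈ Finset.range M, 2 ^ (a k) := by
      rw [hnmod i]
      exact Finset.sum_le_sum_of_subset hsub
    omega
  -- no carry above a M
  have hnocarry_hi : ∀ i, a M < i → m % 2 ^ i + (n - m) % 2 ^ i < 2 ^ i := by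
    intro i hi
    have hmmod : m % 2 ^ i = m :=
      Nat.mod_eq_of_lt (lt_of_le_of_lt hmS (lt_of_lt_of_le haM1 (pow_le_pow_right₀ one_le_two hi)))
    set t₁ := ∑ k ∈ (Finset.Ico (M + 1) K).filter (fun k => a k < i), 2 ^ (a k) with ht₁
    have htsplit : t = t₁ + ∑ k ∈ (Finset.Ico (M + 1) K).filter (fun k => ¬ a k < i), 2 ^ (a k) :=
      (Finset.sum_filter_add_sum_filter_not _ _ _).symm
    have hdvd : 2 ^ i ∣ ∑ k ∈ (Finset.Ico (M + 1) K).filter (fun k => ¬ a k < i), 2 ^ (a k) :=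
      Finset.dvd_sum fun k hk =>
        pow_dvd_pow 2 (le_of_not_gt (by simpa using (Finset.mem_filter.1 hk).2))
    have hunion : (Finset.range K).filter (fun k => a k < i) =
        Finset.range (M + 1) ∪ (Finset.Ico (M + 1) K).filter (fun k => a k < i) := by
      ext k
      simp only [Finset.mem_filter, Finset.mem_range, Finset.mem_union, Finset.mem_Ico]
      constructor
      · rintro ⟨hkK, hki⟩
        by_cases h : k < M + 1
        · exact Or.inl h
        · exact Or.inr ⟨⟨by omega, hkK⟩, hki⟩
      · rintro (h | ⟨⟨h1, h2⟩, h3⟩)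
        · refine ⟨by omega, ?_⟩
          have : a k ≤ a M := ha.monotone (by omega)
          omega
        · exact ⟨h2, h3⟩
    have hdisj : Disjoint (Finset.range (M + 1))
        ((Finset.Ico (M + 1) K).filter (fun k => a k < i)) := by
      apply Finset.disjoint_left.2
      intro k hk hk2
      have := (Finset.mem_filter.1 hk2).1
      simp only [Finset.mem_Ico] at this
      simp only [Finset.mem_range] at hk
      omega
    have hkey : m + (r + t₁) = n % 2 ^ i := by
      rw [hnmod i, hunion, Finset.sum_union hdisj, ← hS, ← hr, ht₁]
      ring
    have hlt : m + (r + t₁) < 2 ^ i := by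
      rw [hkey]
      exact Nat.mod_lt _ (pow_pos (by norm_num) i)
    have hxmod : (n - m) % 2 ^ i = r + t₁ := by
      obtain ⟨c, hc⟩ := hdvd
      rw [hx, htsplit, hc, show r + (t₁ + 2 ^ i * c) = (r + t₁) + 2 ^ i * c by ring,
        Nat.add_mul_mod_self_left, Nat.mod_eq_of_lt (by omega)]
    omega
  -- value via Kummer
  have hn0 : n ≠ 0 := by omega
  have hlog : Nat.log 2 n < n + 1 := Nat.lt_succ_of_le (Nat.log_le_self 2 n)
  have hV := padicValNat_choose (p := 2) hmn hlog
  set V := padicValNat 2 (n.choose m) with hVdef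
  set F := (Finset.Ico 1 (n + 1)).filter
    (fun i => 2 ^ i ≤ m % 2 ^ i + (n - m) % 2 ^ i) with hF
  have haMn : a M ≤ n := by
    have h1 : a M < 2 ^ (a M) := Nat.lt_two_pow_self
    have h2 : 2 ^ (a M) ≤ S := by omega
    omega
  have hsub1 : Finset.Ico (b N + 1) (a M + 1) ⊆ F := by
    intro i hi
    simp only [Finset.mem_Ico] at hi
    refine Finset.mem_filter.2 ⟨Finset.mem_Ico.2 ⟨by omega, by omega⟩, ?_⟩
    exact hcarry i (by omega) (by omega)
  have hsub2 : F ⊆ Finset.Ico 1 (a M + 1) := by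
    intro i hi
    obtain ⟨h1, h2⟩ := Finset.mem_filter.1 hi
    simp only [Finset.mem_Ico] at h1 ⊢
    refine ⟨h1.1, ?_⟩
    by_contra hcon
    exact absurd h2 (not_le.2 (hnocarry_hi i (by omega)))
  have hVle : V ≤ a M := by
    have := Finset.card_le_card hsub2
    rw [Nat.card_Ico] at this
    omega
  have hVge : a M ≤ V + b N := by
    have := Finset.card_le_card hsub1
    rw [Nat.card_Ico] at this
    omega
  refine ⟨hmn, hVle, hVge, ?_⟩
  -- equality case
  intro hN0
  subst hN0
  have hmpow : m = 2 ^ (b 0) := by simpa using hm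
  have hb0aM : b 0 ≤ a M := by
    have : (2 : ℕ) ^ (b 0) < 2 ^ (a M + 1) := by omega
    have := (pow_lt_pow_iff_right₀ (a := 2) one_lt_two).1 this
    omega
  have hsub3 : F ⊆ Finset.Ico (b 0 + 1) (a M + 1) := by
    intro i hi
    obtain ⟨h1, h2⟩ := Finset.mem_filter.1 hi
    have h3 := hsub2 hi
    simp only [Finset.mem_Ico] at h1 h3 ⊢
    refine ⟨?_, h3.2⟩
    by_contra hcon
    push_neg at hcon
    have hmmod : m % 2 ^ i = 0 := by
      obtain ⟨c, hc⟩ := pow_dvd_pow 2 (show i ≤ b 0 by omega)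
      rw [hmpow, hc, Nat.mul_mod_right]
    have hlt2 : (n - m) % 2 ^ i < 2 ^ i := Nat.mod_lt _ (pow_pos two_pos i)
    omega
  have hFeq : F = Finset.Ico (b 0 + 1) (a M + 1) := Finset.Subset.antisymm hsub3 hsub1
  have hcard : F.card = a M + 1 - (b 0 + 1) := by rw [hFeq, Nat.card_Ico]
  omega

/-- For `γ = Σ 2^{a_i}` with `(a_i)` strictly increasing, and `m = Σ_{i=0}^N 2^{b_i}` with
`Σ_{i<M} 2^{a_i} < m ≤ Σ_{i≤M} 2^{a_i}`, one has `v₂(C(γ,m)) ≥ a_M - b_N`, with equality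
`v₂(C(γ,2^b)) = a_M - b` when `m = 2^b` is a power of two (the case `N = 0`). -/
theorem stmt_5 (a : ℕ → ℕ) (ha : StrictMono a)
    (γ : ℤ_[2]) (hγ : γ = ∑' i : ℕ, (2 : ℤ_[2]) ^ (a i))
    (N : ℕ) (b : ℕ → ℕ) (hb : StrictMonoOn b (Set.Iic N))
    (m : ℕ) (hm : m = ∑ i ∈ Finset.range (N + 1), 2 ^ (b i))
    (M : ℕ) (hM1 : ∑ i ∈ Finset.range M, 2 ^ (a i) < m)
    (hM2 : m ≤ ∑ i ∈ Finset.range (M + 1), 2 ^ (a i)) :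
    pChoose 2 (γ : ℚ_[2]) m ≠ 0 ∧
    ((a M : ℤ) - (b N : ℤ)) ≤ (pChoose 2 (γ : ℚ_[2]) m).valuation ∧
    (N = 0 → (pChoose 2 (γ : ℚ_[2]) m).valuation = (a M : ℤ) - (b 0 : ℤ)) := by
  have hmono : StrictMono fun e : ℤ => (2:ℝ) ^ e := zpow_right_strictMono₀ one_lt_two
  set K := max (M + 1) (a M + m + 2) with hK
  have hK1 : M < K := lt_of_lt_of_le (Nat.lt_succ_self M) (le_max_left _ _)
  have hK2 : a M + m + 2 ≤ K := le_max_right _ _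
  obtain ⟨hmn, hVle, hVge, hVeq⟩ := aux_kummer a ha N b hb m hm M hM1 hM2 K hK1
  set n := ∑ k ∈ Finset.range K, 2 ^ (a k) with hn
  set V := padicValNat 2 (n.choose m) with hV
  have hchoose_pos : 0 < n.choose m := Nat.choose_pos hmn
  set c : ℚ_[2] := (n.choose m : ℚ_[2]) with hc
  have hc0 : c ≠ 0 := Nat.cast_ne_zero.2 hchoose_pos.ne'
  have hcval : c.valuation = V := by rw [hc, Padic.valuation_natCast]
  have hcnorm : ‖c‖ = (2:ℝ) ^ (-(V:ℤ)) := by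
    rw [Padic.norm_eq_zpow_neg_valuation hc0, hcval]
    norm_num
  -- factorial valuation
  set w := padicValNat 2 (Nat.factorial m) with hwdef
  have hw : w ≤ m := by
    have := sub_one_mul_padicValNat_factorial (p := 2) m
    omega
  have hfac0 : ((Nat.factorial m : ℚ_[2])) ≠ 0 := Nat.cast_ne_zero.2 m.factorial_ne_zero
  have hfacnorm : ‖(Nat.factorial m : ℚ_[2])‖ = (2:ℝ) ^ (-(w:ℤ)) := by
    rw [Padic.norm_eq_zpow_neg_valuation hfac0, Padic.valuation_natCast, hwdef]
    norm_num
  -- the difference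
  set nz : ℤ_[2] := (n : ℤ_[2]) with hnz
  set Δ : ℤ_[2] := (descPochhammer ℤ_[2] m).eval γ - (descPochhammer ℤ_[2] m).eval nz with hΔdef
  have hΔdvd : (γ - nz) ∣ Δ := Polynomial.sub_dvd_eval_sub γ nz _
  have hγn : ‖γ - nz‖ ≤ 2 * (2:ℝ)⁻¹ ^ K := by
    have hcast : nz = ∑ k ∈ Finset.range K, (2:ℤ_[2]) ^ (a k) := by
      rw [hnz, hn]
      push_cast
      rfl
    rw [hγ, hcast]
    exact aux_tail a ha K
  have hΔnorm : ‖Δ‖ ≤ 2 * (2:ℝ)⁻¹ ^ K := by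
    obtain ⟨u, hu⟩ := hΔdvd
    rw [hu, norm_mul]
    calc ‖γ - nz‖ * ‖u‖ ≤ ‖γ - nz‖ * 1 :=
          mul_le_mul_of_nonneg_left (PadicInt.norm_le_one u) (norm_nonneg _)
      _ = ‖γ - nz‖ := mul_one _
      _ ≤ _ := hγn
  have hd : pChoose 2 (γ : ℚ_[2]) m - c = ((Δ : ℤ_[2]) : ℚ_[2]) / (Nat.factorial m : ℚ_[2]) := by
    have h1 : c = pChoose 2 ((n : ℕ) : ℚ_[2]) m := (aux_pchoose_nat n m).symm
    rw [h1]
    unfold pChoose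
    have h2 : ((n : ℕ) : ℚ_[2]) = ((nz : ℤ_[2]) : ℚ_[2]) := by rw [hnz]; push_cast; rfl
    rw [h2, div_sub_div_same, aux_eval_cast, aux_eval_cast, hΔdef]
    push_cast
    ring
  have h4 : (2:ℝ) ^ (1 - (K:ℤ)) = 2 * (2:ℝ)⁻¹ ^ K := by
    rw [zpow_sub₀ (by norm_num : (2:ℝ) ≠ 0), zpow_one, zpow_natCast, inv_pow]
    rw [div_eq_mul_inv]
  have hdnorm : ‖pChoose 2 (γ : ℚ_[2]) m - c‖ ≤ (2:ℝ) ^ (1 - (K:ℤ) + w) := by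
    rw [hd, norm_div, hfacnorm]
    have h3 : ‖((Δ : ℤ_[2]) : ℚ_[2])‖ = ‖Δ‖ := (PadicInt.norm_def (p := 2)).symm
    rw [h3, div_le_iff₀ (by positivity)]
    have h5 : (2:ℝ) ^ (1 - (K:ℤ) + w) * (2:ℝ) ^ (-(w:ℤ)) = (2:ℝ) ^ (1 - (K:ℤ)) := by
      rw [← zpow_add₀ (by norm_num : (2:ℝ) ≠ 0)]
      ring_nf
    rw [h5, h4]
    exact hΔnorm
  have hcontr : ‖pChoose 2 (γ : ℚ_[2]) m - c‖ < ‖c‖ := by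
    refine lt_of_le_of_lt hdnorm ?_
    rw [hcnorm]
    apply hmono
    omega
  have hnormeq : ‖pChoose 2 (γ : ℚ_[2]) m‖ = ‖c‖ := by
    have hsplit : pChoose 2 (γ : ℚ_[2]) m = c + (pChoose 2 (γ : ℚ_[2]) m - c) := by ring
    rw [hsplit, Padic.add_eq_max_of_ne hcontr.ne', max_eq_left hcontr.le]
  have hne0 : pChoose 2 (γ : ℚ_[2]) m ≠ 0 := by
    intro h
    rw [h, norm_zero] at hnormeq
    exact hc0 (norm_eq_zero.1 hnormeq.symm)
  have hvq := Padic.norm_eq_zpow_neg_valuation hne0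
  rw [hnormeq, hcnorm, show ((2:ℕ):ℝ) = 2 from by norm_num] at hvq
  have hval : (pChoose 2 (γ : ℚ_[2]) m).valuation = (V:ℤ) := by
    have h6 := hmono.injective hvq
    omega
  refine ⟨hne0, ?_, ?_⟩
  · rw [hval]
    omega
  · intro h0
    rw [hval]
    have := hVeq h0
    omega
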